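/- Let X = (X_1,...,X_m) and Y = (Y_1,...,Y_n) be arbitrary measurements (POVMs) on a finite-dimensional complex Hilbert space and let ψ be a unit vector. Then H(X,ψ) + H(Y,ψ) ≥ -2 log₂ max_{i,j} |⟨ψ, X_i Y_j ψ⟩| / (‖X_i^{1/2} ψ‖ ‖Y_j^{1/2} ψ‖), where the maximum is over i,j with X_i^{1/2} ψ ≠ 0 and Y_j^{1/2} ψ ≠ 0. -/

import Mathlib

open ContinuousLinearMap Complex Finset

section Aux

variable {H : Type*} [NormedAddCommGroup H] [InnerProductSpace ℂ H] [FiniteDimensional ℂ H]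

private lemma aux_symm {T : H →L[ℂ] H} (hT : (T : H →ₗ[ℂ] H).IsSymmetric) (x y : H) :
    (inner ℂ (T x) y : ℂ) = inner ℂ x (T y) := hT x y

/-- For `0 ≤ Xᵢ` with `∑ Xᵢ = 1` and square roots `SXᵢ`, we have `∑ᵢ ‖SXᵢ w‖² = ‖w‖²`. -/
private lemma aux_sum_sq {m : ℕ} (X : Fin m → H →L[ℂ] H) (hXsum : ∑ i, X i = 1)
    (SX : Fin m → H →L[ℂ] H) (hSX : ∀ i, (SX i).IsPositive ∧ SX i ∘L SX i = X i)
    (w : H) : ∑ i, ‖SX i w‖ ^ 2 = ‖w‖ ^ 2 := by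
  have h1 : ∀ i, ‖SX i w‖ ^ 2 = (inner ℂ w (X i w) : ℂ).re := by
    intro i
    have : (inner ℂ (SX i w) (SX i w) : ℂ) = inner ℂ w (X i w) := by
      rw [aux_symm (hSX i).1.1 w (SX i w), ← comp_apply, (hSX i).2]
    rw [← this, inner_self_eq_norm_sq_to_K]
    simp [← Complex.ofReal_pow]
  simp only [h1]
  rw [← Complex.re_sum, ← inner_sum]
  have : ∑ i, X i w = w := by
    rw [← ContinuousLinearMap.sum_apply, hXsum, ContinuousLinearMap.one_apply]
  rw [this]
  rw [inner_self_eq_norm_sq_to_K]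
  simp [← Complex.ofReal_pow]

/-- Key contraction bound: for `0 ≤ λᵢ` bounded coefficients, `‖∑ λᵢ • Xᵢ ψ‖ ≤ ‖ψ‖`. -/
private lemma aux_comb {m : ℕ} (X : Fin m → H →L[ℂ] H) (hXsum : ∑ i, X i = 1)
    (SX : Fin m → H →L[ℂ] H) (hSX : ∀ i, (SX i).IsPositive ∧ SX i ∘L SX i = X i)
    (ψ : H) (hψ : ‖ψ‖ = 1) (lam : Fin m → ℂ) (hlam : ∀ i, ‖lam i‖ ≤ 1) :
    ‖∑ i, lam i • X i ψ‖ ≤ 1 := by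
  set v : H := ∑ i, lam i • X i ψ with hv
  have hv2 : ‖v‖ ^ 2 ≤ ∑ i, ‖SX i v‖ * ‖SX i ψ‖ := by
    have e1 : (‖v‖ : ℝ) ^ 2 = (inner ℂ v v : ℂ).re := by
      rw [inner_self_eq_norm_sq_to_K]; simp [← Complex.ofReal_pow]
    rw [e1]
    have e2 : (inner ℂ v v : ℂ) = ∑ i, lam i * (inner ℂ v (X i ψ) : ℂ) := by
      conv_lhs => rw [hv]
      rw [inner_sum]
      exact Finset.sum_congr rfl fun i _ => inner_smul_right _ _ _
    rw [e2, Complex.re_sum]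
    refine Finset.sum_le_sum fun i _ => ?_
    have h3 : (lam i * (inner ℂ v (X i ψ) : ℂ)).re ≤ ‖lam i * (inner ℂ v (X i ψ) : ℂ)‖ :=
      Complex.re_le_norm _
    refine h3.trans ?_
    rw [norm_mul]
    have h4 : (inner ℂ v (X i ψ) : ℂ) = inner ℂ (SX i v) (SX i ψ) := by
      rw [aux_symm (hSX i).1.1 v (SX i ψ), ← comp_apply, (hSX i).2]
    have h5 : ‖(inner ℂ v (X i ψ) : ℂ)‖ ≤ ‖SX i v‖ * ‖SX i ψ‖ := by
      rw [h4]; exact norm_inner_le_norm _ _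
    calc ‖lam i‖ * ‖(inner ℂ v (X i ψ) : ℂ)‖ ≤ 1 * (‖SX i v‖ * ‖SX i ψ‖) := by
          apply mul_le_mul (hlam i) h5 (norm_nonneg _) zero_le_one
      _ = ‖SX i v‖ * ‖SX i ψ‖ := one_mul _
  have hCS : (∑ i, ‖SX i v‖ * ‖SX i ψ‖) ^ 2 ≤ ‖v‖ ^ 2 * ‖ψ‖ ^ 2 := by
    have := Finset.sum_mul_sq_le_sq_mul_sq Finset.univ (fun i => ‖SX i v‖) (fun i => ‖SX i ψ‖)
    rwa [aux_sum_sq X hXsum SX hSX v, aux_sum_sq X hXsum SX hSX ψ] at this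
  have hA_nonneg : 0 ≤ ∑ i, ‖SX i v‖ * ‖SX i ψ‖ :=
    Finset.sum_nonneg fun i _ => mul_nonneg (norm_nonneg _) (norm_nonneg _)
  rw [hψ, one_pow, mul_one] at hCS
  nlinarith [norm_nonneg v, sq_nonneg (‖v‖ - 1), sq_nonneg ((∑ i, ‖SX i v‖ * ‖SX i ψ‖) - 1)]

end Aux

theorem entropic_uncertainty_povm
    {H : Type*} [NormedAddCommGroup H] [InnerProductSpace ℂ H] [FiniteDimensional ℂ H]
    {m n : ℕ} (X : Fin m → H →L[ℂ] H) (Y : Fin n → H →L[ℂ] H)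
    (hX : ∀ i, (X i).IsPositive) (hXsum : ∑ i, X i = 1)
    (hY : ∀ j, (Y j).IsPositive) (hYsum : ∑ j, Y j = 1)
    (SX : Fin m → H →L[ℂ] H) (hSX : ∀ i, (SX i).IsPositive ∧ SX i ∘L SX i = X i)
    (SY : Fin n → H →L[ℂ] H) (hSY : ∀ j, (SY j).IsPositive ∧ SY j ∘L SY j = Y j)
    (ψ : H) (hψ : ‖ψ‖ = 1) :
    (-∑ i, (inner ℂ ψ (X i ψ) : ℂ).re * Real.logb 2 (inner ℂ ψ (X i ψ) : ℂ).re) +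
      (-∑ j, (inner ℂ ψ (Y j ψ) : ℂ).re * Real.logb 2 (inner ℂ ψ (Y j ψ) : ℂ).re) ≥
    -2 * Real.logb 2 (sSup {r : ℝ | ∃ i j, SX i ψ ≠ 0 ∧ SY j ψ ≠ 0 ∧
      r = ‖(inner ℂ ψ ((X i ∘L Y j) ψ) : ℂ)‖ / (‖SX i ψ‖ * ‖SY j ψ‖)}) := by
  set c : ℝ := sSup {r : ℝ | ∃ i j, SX i ψ ≠ 0 ∧ SY j ψ ≠ 0 ∧
      r = ‖(inner ℂ ψ ((X i ∘L Y j) ψ) : ℂ)‖ / (‖SX i ψ‖ * ‖SY j ψ‖)} with hc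
  set p : Fin m → ℝ := fun i => ‖SX i ψ‖ ^ 2 with hpdef
  set q : Fin n → ℝ := fun j => ‖SY j ψ‖ ^ 2 with hqdef
  set z : Fin m → Fin n → ℂ := fun i j => (inner ℂ ψ ((X i ∘L Y j) ψ) : ℂ) with hzdef
  have hXap : ∀ i (w : H), X i w = SX i (SX i w) := by
    intro i w; rw [← (hSX i).2]; rfl
  have hYap : ∀ j (w : H), Y j w = SY j (SY j w) := by
    intro j w; rw [← (hSY j).2]; rfl
  have hinner_p : ∀ i, (inner ℂ ψ (X i ψ) : ℂ) = ((p i : ℝ) : ℂ) := by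
    intro i
    rw [hXap i ψ, ← aux_symm (hSX i).1.1 ψ (SX i ψ), inner_self_eq_norm_sq_to_K]
    simp [hpdef, ← Complex.ofReal_pow]
  have hinner_q : ∀ j, (inner ℂ ψ (Y j ψ) : ℂ) = ((q j : ℝ) : ℂ) := by
    intro j
    rw [hYap j ψ, ← aux_symm (hSY j).1.1 ψ (SY j ψ), inner_self_eq_norm_sq_to_K]
    simp [hqdef, ← Complex.ofReal_pow]
  have hz_eq : ∀ i j, z i j = (inner ℂ (X i ψ) (Y j ψ) : ℂ) := by
    intro i j
    simp only [hzdef, comp_apply]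
    exact (aux_symm (hX i).1 ψ (Y j ψ)).symm
  -- marginals
  have hrow : ∀ i, ∑ j, z i j = ((p i : ℝ) : ℂ) := by
    intro i
    have e1 : ∑ j, z i j = (inner ℂ ψ (∑ j, (X i ∘L Y j) ψ) : ℂ) := (inner_sum _ _ _).symm
    rw [e1]
    have e2 : ∑ j, (X i ∘L Y j) ψ = X i ψ := by
      simp only [comp_apply]
      rw [← map_sum, ← ContinuousLinearMap.sum_apply, hYsum, ContinuousLinearMap.one_apply]
    rw [e2, hinner_p]
  have hcol : ∀ j, ∑ i, z i j = ((q j : ℝ) : ℂ) := by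
    intro j
    have e1 : ∑ i, z i j = (inner ℂ ψ (∑ i, (X i ∘L Y j) ψ) : ℂ) := (inner_sum _ _ _).symm
    rw [e1]
    have e2 : ∑ i, (X i ∘L Y j) ψ = Y j ψ := by
      simp only [comp_apply]
      rw [← ContinuousLinearMap.sum_apply, hXsum, ContinuousLinearMap.one_apply]
    rw [e2, hinner_q]
  have hpsum : ∑ i, p i = 1 := by
    have e1 : ∑ i, ((p i : ℝ) : ℂ) = (inner ℂ ψ (∑ i, X i ψ) : ℂ) := by
      rw [inner_sum]
      exact Finset.sum_congr rfl fun i _ => (hinner_p i).symm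
    have e2 : ∑ i, X i ψ = ψ := by
      rw [← ContinuousLinearMap.sum_apply, hXsum, ContinuousLinearMap.one_apply]
    rw [e2] at e1
    rw [inner_self_eq_norm_sq_to_K, hψ] at e1
    have : ((∑ i, p i : ℝ) : ℂ) = ((1 : ℝ) : ℂ) := by push_cast; simpa using e1
    exact_mod_cast this
  have hqsum : ∑ j, q j = 1 := by
    have e1 : ∑ j, ((q j : ℝ) : ℂ) = (inner ℂ ψ (∑ j, Y j ψ) : ℂ) := by
      rw [inner_sum]
      exact Finset.sum_congr rfl fun j _ => (hinner_q j).symm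
    have e2 : ∑ j, Y j ψ = ψ := by
      rw [← ContinuousLinearMap.sum_apply, hYsum, ContinuousLinearMap.one_apply]
    rw [e2] at e1
    rw [inner_self_eq_norm_sq_to_K, hψ] at e1
    have : ((∑ j, q j : ℝ) : ℂ) = ((1 : ℝ) : ℂ) := by push_cast; simpa using e1
    exact_mod_cast this
  -- contraction bounds
  have hSXc : ∀ i (w : H), ‖SX i w‖ ≤ ‖w‖ := by
    intro i w
    have h1 : ‖SX i w‖ ^ 2 ≤ ‖w‖ ^ 2 := by
      have := aux_sum_sq X hXsum SX hSX w
      rw [← this]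
      exact Finset.single_le_sum (f := fun k => ‖SX k w‖ ^ 2) (fun k _ => sq_nonneg _)
        (Finset.mem_univ i)
    nlinarith [norm_nonneg (SX i w), norm_nonneg w]
  have hSYc : ∀ j (w : H), ‖SY j w‖ ≤ ‖w‖ := by
    intro j w
    have h1 : ‖SY j w‖ ^ 2 ≤ ‖w‖ ^ 2 := by
      have := aux_sum_sq Y hYsum SY hSY w
      rw [← this]
      exact Finset.single_le_sum (f := fun k => ‖SY k w‖ ^ 2) (fun k _ => sq_nonneg _)
        (Finset.mem_univ j)
    nlinarith [norm_nonneg (SY j w), norm_nonneg w]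
  -- pointwise Cauchy-Schwarz bound
  have hzb : ∀ i j, ‖z i j‖ ≤ ‖SX i ψ‖ * ‖SY j ψ‖ := by
    intro i j
    rw [hz_eq]
    have e1 : (inner ℂ (X i ψ) (Y j ψ) : ℂ) = inner ℂ (SY j (X i ψ)) (SY j ψ) := by
      rw [aux_symm (hSY j).1.1 (X i ψ) (SY j ψ), ← hYap]
    rw [e1]
    refine (norm_inner_le_norm _ _).trans ?_
    have : ‖SY j (X i ψ)‖ ≤ ‖SX i ψ‖ := by
      refine (hSYc j _).trans ?_
      rw [hXap i ψ]
      exact hSXc i _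
    exact mul_le_mul_of_nonneg_right this (norm_nonneg _)
  -- z vanishes when roots vanish
  have hz0X : ∀ i j, SX i ψ = 0 → z i j = 0 := by
    intro i j h
    rw [hz_eq, hXap i ψ, h, map_zero, inner_zero_left]
  have hz0Y : ∀ i j, SY j ψ = 0 → z i j = 0 := by
    intro i j h
    rw [hz_eq, hYap j ψ, h, map_zero, inner_zero_right]
  -- sSup : bounded above and positive
  have hBdd : BddAbove {r : ℝ | ∃ i j, SX i ψ ≠ 0 ∧ SY j ψ ≠ 0 ∧
      r = ‖(inner ℂ ψ ((X i ∘L Y j) ψ) : ℂ)‖ / (‖SX i ψ‖ * ‖SY j ψ‖)} := by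
    refine ⟨1, fun r hr => ?_⟩
    obtain ⟨i, j, hi, hj, rfl⟩ := hr
    rw [div_le_one (mul_pos (norm_pos_iff.mpr hi) (norm_pos_iff.mpr hj))]
    exact hzb i j
  have hzsum : ∑ i, ∑ j, z i j = 1 := by
    have : ∑ i, ∑ j, z i j = ∑ i, ((p i : ℝ) : ℂ) := Finset.sum_congr rfl fun i _ => hrow i
    rw [this, ← Complex.ofReal_sum, hpsum, Complex.ofReal_one]
  have hc_pos : 0 < c := by
    have h1 : ∃ i, ∑ j, z i j ≠ 0 := by
      by_contra h
      push_neg at h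
      rw [Finset.sum_congr rfl fun i _ => h i] at hzsum
      simp at hzsum
    obtain ⟨i0, hi0⟩ := h1
    have h2 : ∃ j, z i0 j ≠ 0 := by
      by_contra h
      push_neg at h
      exact hi0 (by rw [Finset.sum_congr rfl fun j _ => h j]; simp)
    obtain ⟨j0, hj0⟩ := h2
    have hX0 : SX i0 ψ ≠ 0 := fun h => hj0 (hz0X i0 j0 h)
    have hY0 : SY j0 ψ ≠ 0 := fun h => hj0 (hz0Y i0 j0 h)
    have hmem : ‖z i0 j0‖ / (‖SX i0 ψ‖ * ‖SY j0 ψ‖) ∈ {r : ℝ | ∃ i j, SX i ψ ≠ 0 ∧ SY j ψ ≠ 0 ∧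
        r = ‖(inner ℂ ψ ((X i ∘L Y j) ψ) : ℂ)‖ / (‖SX i ψ‖ * ‖SY j ψ‖)} :=
      ⟨i0, j0, hX0, hY0, rfl⟩
    have hle := le_csSup hBdd hmem
    have hpos : 0 < ‖z i0 j0‖ / (‖SX i0 ψ‖ * ‖SY j0 ψ‖) := by
      exact div_pos (norm_pos_iff.mpr hj0)
        (mul_pos (norm_pos_iff.mpr hX0) (norm_pos_iff.mpr hY0))
    exact lt_of_lt_of_le hpos hle
  have hcle : ∀ i j, ‖z i j‖ ≤ c * (‖SX i ψ‖ * ‖SY j ψ‖) := by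
    intro i j
    by_cases hXi : SX i ψ = 0
    · rw [hz0X i j hXi, norm_zero]; positivity
    by_cases hYj : SY j ψ = 0
    · rw [hz0Y i j hYj, norm_zero]; positivity
    have hmem : ‖z i j‖ / (‖SX i ψ‖ * ‖SY j ψ‖) ∈ {r : ℝ | ∃ i j, SX i ψ ≠ 0 ∧ SY j ψ ≠ 0 ∧
        r = ‖(inner ℂ ψ ((X i ∘L Y j) ψ) : ℂ)‖ / (‖SX i ψ‖ * ‖SY j ψ‖)} := ⟨i, j, hXi, hYj, rfl⟩
    have hle := le_csSup hBdd hmem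
    rwa [div_le_iff₀ (mul_pos (norm_pos_iff.mpr hXi) (norm_pos_iff.mpr hYj))] at hle
  -- exponential weights
  set a : Fin m → ℝ := fun i => Real.log ‖SX i ψ‖ - Real.log c with hadef
  set b : Fin n → ℝ := fun j => Real.log ‖SY j ψ‖ with hbdef
  set F : ℂ → ℂ := fun s => ∑ i, ∑ j, z i j * Complex.exp (s * ((a i + b j : ℝ) : ℂ)) with hFdef
  have hFdiff : Differentiable ℂ F := by
    apply Differentiable.fun_sum; intro i _
    apply Differentiable.fun_sum; intro j _
    exact (differentiable_const _).mul ((differentiable_id.mul (differentiable_const _)).cexp)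
  have hexp_norm : ∀ (s : ℂ) (d : ℝ), ‖Complex.exp (s * (d : ℂ))‖ = Real.exp (s.re * d) := by
    intro s d
    rw [Complex.norm_exp]
    congr 1
    simp [Complex.mul_re]
  have hbound : ∀ s : ℂ, s.re ∈ Set.Icc (0 : ℝ) 1 →
      ‖F s‖ ≤ ∑ i, ∑ j, ‖z i j‖ * Real.exp |a i + b j| := by
    intro s hs
    refine (norm_sum_le _ _).trans ?_
    refine Finset.sum_le_sum fun i _ => ?_
    refine (norm_sum_le _ _).trans ?_
    refine Finset.sum_le_sum fun j _ => ?_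
    rw [norm_mul, hexp_norm]
    refine mul_le_mul_of_nonneg_left ?_ (norm_nonneg _)
    apply Real.exp_le_exp.mpr
    calc s.re * (a i + b j) ≤ |s.re * (a i + b j)| := le_abs_self _
      _ = |s.re| * |a i + b j| := abs_mul _ _
      _ ≤ 1 * |a i + b j| := by
          refine mul_le_mul_of_nonneg_right ?_ (abs_nonneg _)
          rw [_root_.abs_of_nonneg hs.1]; exact hs.2
      _ = |a i + b j| := one_mul _
  -- boundary re = 0
  have hbd0 : ∀ s : ℂ, s.re = 0 → ‖F s‖ ≤ 1 := by
    intro s hs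
    have key : F s = (inner ℂ (∑ i, (starRingEnd ℂ) (Complex.exp (s * ((a i : ℝ) : ℂ))) • X i ψ)
        (∑ j, Complex.exp (s * ((b j : ℝ) : ℂ)) • Y j ψ) : ℂ) := by
      rw [sum_inner]
      refine Finset.sum_congr rfl fun i _ => ?_
      rw [inner_smul_left, inner_sum, Finset.mul_sum]
      refine Finset.sum_congr rfl fun j _ => ?_
      rw [inner_smul_right, Complex.conj_conj, ← hz_eq i j, Complex.ofReal_add, mul_add,
        Complex.exp_add]
      ring
    rw [key]
    refine (norm_inner_le_norm _ _).trans ?_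
    have hu : ‖∑ i, (starRingEnd ℂ) (Complex.exp (s * ((a i : ℝ) : ℂ))) • X i ψ‖ ≤ 1 :=
      aux_comb X hXsum SX hSX ψ hψ _ (fun i => by
        rw [RCLike.norm_conj, hexp_norm, hs, zero_mul, Real.exp_zero])
    have hv : ‖∑ j, Complex.exp (s * ((b j : ℝ) : ℂ)) • Y j ψ‖ ≤ 1 :=
      aux_comb Y hYsum SY hSY ψ hψ _ (fun j => by
        rw [hexp_norm, hs, zero_mul, Real.exp_zero])
    calc ‖∑ i, (starRingEnd ℂ) (Complex.exp (s * ((a i : ℝ) : ℂ))) • X i ψ‖ *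
          ‖∑ j, Complex.exp (s * ((b j : ℝ) : ℂ)) • Y j ψ‖
        ≤ 1 * 1 := mul_le_mul hu hv (norm_nonneg _) zero_le_one
      _ = 1 := one_mul 1
  -- boundary re = 1
  have hbd1 : ∀ s : ℂ, s.re = 1 → ‖F s‖ ≤ 1 := by
    intro s hs
    have h1 : ‖F s‖ ≤ ∑ i, ∑ j, ‖z i j‖ * Real.exp (a i + b j) := by
      refine (norm_sum_le _ _).trans ?_
      refine Finset.sum_le_sum fun i _ => ?_
      refine (norm_sum_le _ _).trans ?_
      refine Finset.sum_le_sum fun j _ => ?_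
      rw [norm_mul, hexp_norm, hs, one_mul]
    refine h1.trans ?_
    have h2 : ∀ i j, ‖z i j‖ * Real.exp (a i + b j) ≤ p i * q j := by
      intro i j
      by_cases hz : z i j = 0
      · rw [hz, norm_zero, zero_mul]
        have : (0:ℝ) ≤ p i := sq_nonneg _
        have : (0:ℝ) ≤ q j := sq_nonneg _
        positivity
      · have hXi : SX i ψ ≠ 0 := fun h => hz (hz0X i j h)
        have hYj : SY j ψ ≠ 0 := fun h => hz (hz0Y i j h)
        have hXp : (0:ℝ) < ‖SX i ψ‖ := norm_pos_iff.mpr hXi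
        have hYp : (0:ℝ) < ‖SY j ψ‖ := norm_pos_iff.mpr hYj
        have he : Real.exp (a i + b j) = ‖SX i ψ‖ * ‖SY j ψ‖ / c := by
          simp only [hadef, hbdef]
          rw [Real.exp_add, Real.exp_sub, Real.exp_log hXp, Real.exp_log hYp,
            Real.exp_log hc_pos]
          ring
        rw [he]
        calc ‖z i j‖ * (‖SX i ψ‖ * ‖SY j ψ‖ / c)
            ≤ (c * (‖SX i ψ‖ * ‖SY j ψ‖)) * (‖SX i ψ‖ * ‖SY j ψ‖ / c) := by
              refine mul_le_mul_of_nonneg_right (hcle i j) ?_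
              positivity
          _ = ‖SX i ψ‖ ^ 2 * ‖SY j ψ‖ ^ 2 := by
              field_simp
          _ = p i * q j := rfl
    refine (Finset.sum_le_sum fun i _ => Finset.sum_le_sum fun j _ => h2 i j).trans ?_
    have h3 : ∑ i, ∑ j, p i * q j = 1 := by
      simp_rw [← Finset.mul_sum, hqsum, mul_one]
      exact hpsum
    rw [h3]
  -- Hadamard three lines
  have hF01 : ∀ t : ℝ, 0 ≤ t → t ≤ 1 → ‖F (t : ℂ)‖ ≤ 1 := by
    intro t ht0 ht1
    have hmem : (t : ℂ) ∈ Complex.HadamardThreeLines.verticalClosedStrip 0 1 := by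
      simp only [Complex.HadamardThreeLines.verticalClosedStrip, Set.mem_preimage,
        Complex.ofReal_re, Set.mem_Icc]
      exact ⟨ht0, ht1⟩
    have hB : BddAbove ((norm ∘ F) '' Complex.HadamardThreeLines.verticalClosedStrip 0 1) := by
      refine ⟨∑ i, ∑ j, ‖z i j‖ * Real.exp |a i + b j|, fun x hx => ?_⟩
      obtain ⟨s, hs, rfl⟩ := hx
      exact hbound s hs
    have h := Complex.HadamardThreeLines.norm_le_interp_of_mem_verticalClosedStrip' (f := F) zero_lt_one hmem
      (hFdiff.diffContOnCl) hB (fun w hw => hbd0 w hw) (fun w hw => hbd1 w hw)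
    simpa [Complex.ofReal_re, Real.one_rpow] using h
  -- real restriction and derivative at 0
  set G : ℝ → ℝ := fun t => ∑ i, ∑ j, (z i j).re * Real.exp (t * (a i + b j)) with hGdef
  have hGF : ∀ t : ℝ, G t = (F (t : ℂ)).re := by
    intro t
    rw [hGdef, hFdef]
    simp only [Complex.re_sum]
    refine Finset.sum_congr rfl fun i _ => ?_
    refine Finset.sum_congr rfl fun j _ => ?_
    rw [show (t : ℂ) * ((a i + b j : ℝ) : ℂ) = ((t * (a i + b j) : ℝ) : ℂ) by push_cast; ring,
      ← Complex.ofReal_exp, Complex.mul_re, Complex.ofReal_re, Complex.ofReal_im, mul_zero,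
      sub_zero]
  have hG1 : ∀ t : ℝ, t ∈ Set.Ioc (0:ℝ) 1 → G t ≤ 1 := by
    intro t ht
    rw [hGF]
    refine (Complex.re_le_norm _).trans ?_
    exact hF01 t ht.1.le ht.2
  have hG0 : G 0 = 1 := by
    have e : G 0 = ∑ i, ∑ j, (z i j).re := by
      rw [hGdef]
      refine Finset.sum_congr rfl fun i _ => Finset.sum_congr rfl fun j _ => ?_
      rw [zero_mul, Real.exp_zero, mul_one]
    rw [e]
    simp only [← Complex.re_sum]
    rw [hzsum, Complex.one_re]
  set D : ℝ := ∑ i, ∑ j, (z i j).re * (a i + b j) with hDdef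
  have hDer : HasDerivAt G D 0 := by
    have h1 : ∀ i : Fin m,
        HasDerivAt (fun t : ℝ => ∑ j, (z i j).re * Real.exp (t * (a i + b j)))
          (∑ j, (z i j).re * (a i + b j)) 0 := by
      intro i
      have h2 : ∀ j : Fin n, HasDerivAt (fun t : ℝ => (z i j).re * Real.exp (t * (a i + b j)))
          ((z i j).re * (a i + b j)) 0 := by
        intro j
        have h3 : HasDerivAt (fun t : ℝ => t * (a i + b j)) (a i + b j) 0 :=
          hasDerivAt_mul_const _
        have h4 := (h3.exp).const_mul ((z i j).re)
        simpa using h4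
      simpa using HasDerivAt.fun_sum (fun j (_ : j ∈ Finset.univ) => h2 j)
    rw [hGdef, hDdef]
    exact HasDerivAt.fun_sum (fun i (_ : i ∈ Finset.univ) => h1 i)
  have hD : D ≤ 0 := by
    have htend : Filter.Tendsto (slope G 0) (nhdsWithin 0 (Set.Ioi 0)) (nhds D) :=
      (hasDerivAt_iff_tendsto_slope.mp hDer).mono_left
        (nhdsWithin_mono 0 (fun x hx => ne_of_gt hx))
    refine le_of_tendsto htend ?_
    filter_upwards [Ioc_mem_nhdsGT_of_mem (Set.mem_Ico.mpr ⟨le_refl (0:ℝ), one_pos⟩)] with t ht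
    rw [slope_def_field, hG0]
    apply div_nonpos_of_nonpos_of_nonneg
    · linarith [hG1 t ht]
    · rw [sub_zero]
      exact ht.1.le
  -- identify D with the entropy combination
  have hrowre : ∀ i, ∑ j, (z i j).re = p i := by
    intro i
    rw [← Complex.re_sum, hrow i, Complex.ofReal_re]
  have hcolre : ∀ j, ∑ i, (z i j).re = q j := by
    intro j
    rw [← Complex.re_sum, hcol j, Complex.ofReal_re]
  have hD_split : D = (∑ i, p i * a i) + (∑ j, q j * b j) := by
    rw [hDdef]
    have e : ∀ i : Fin m, ∑ j, (z i j).re * (a i + b j)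
        = (∑ j, (z i j).re) * a i + ∑ j, (z i j).re * b j := by
      intro i
      rw [Finset.sum_mul]
      rw [← Finset.sum_add_distrib]
      refine Finset.sum_congr rfl fun j _ => ?_
      ring
    simp only [e, hrowre]
    rw [Finset.sum_add_distrib]
    congr 1
    rw [Finset.sum_comm]
    refine Finset.sum_congr rfl fun j _ => ?_
    rw [← Finset.sum_mul, hcolre j]
  have hkey : (∑ i, p i * Real.log (p i)) + (∑ j, q j * Real.log (q j)) ≤ 2 * Real.log c := by
    have e1 : ∑ i, p i * Real.log (p i) = 2 * ∑ i, p i * Real.log ‖SX i ψ‖ := by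
      rw [Finset.mul_sum]
      refine Finset.sum_congr rfl fun i _ => ?_
      have : Real.log (p i) = 2 * Real.log ‖SX i ψ‖ := by
        rw [hpdef]
        rw [Real.log_pow]
        push_cast
        ring
      rw [this]; ring
    have e2 : ∑ j, q j * Real.log (q j) = 2 * ∑ j, q j * Real.log ‖SY j ψ‖ := by
      rw [Finset.mul_sum]
      refine Finset.sum_congr rfl fun j _ => ?_
      have : Real.log (q j) = 2 * Real.log ‖SY j ψ‖ := by
        rw [hqdef]
        rw [Real.log_pow]
        push_cast
        ring
      rw [this]; ring
    have e3 : ∑ i, p i * a i = (∑ i, p i * Real.log ‖SX i ψ‖) - Real.log c := by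
      rw [hadef]
      simp only [mul_sub]
      rw [Finset.sum_sub_distrib, ← Finset.sum_mul, hpsum, one_mul]
    have e4 : ∑ j, q j * b j = ∑ j, q j * Real.log ‖SY j ψ‖ := rfl
    rw [hD_split, e3, e4] at hD
    linarith
  -- finish : convert to logb
  have hre_p : ∀ i, (inner ℂ ψ (X i ψ) : ℂ).re = p i := by
    intro i; rw [hinner_p i, Complex.ofReal_re]
  have hre_q : ∀ j, (inner ℂ ψ (Y j ψ) : ℂ).re = q j := by
    intro j; rw [hinner_q j, Complex.ofReal_re]
  simp only [hre_p, hre_q, Real.logb]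
  rw [ge_iff_le]
  have hl2 : (0:ℝ) < Real.log 2 := Real.log_pos one_lt_two
  have r1 : ∑ i, p i * (Real.log (p i) / Real.log 2)
      = (∑ i, p i * Real.log (p i)) / Real.log 2 := by
    rw [Finset.sum_div]
    exact Finset.sum_congr rfl fun i _ => by ring
  have r2 : ∑ j, q j * (Real.log (q j) / Real.log 2)
      = (∑ j, q j * Real.log (q j)) / Real.log 2 := by
    rw [Finset.sum_div]
    exact Finset.sum_congr rfl fun j _ => by ring
  have h2 : ((∑ i, p i * Real.log (p i)) + (∑ j, q j * Real.log (q j))) / Real.log 2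
      ≤ (2 * Real.log c) / Real.log 2 := by gcongr
  have e5 : (2 * Real.log c) / Real.log 2 = 2 * (Real.log c / Real.log 2) := by ring
  have e6 : ((∑ i, p i * Real.log (p i)) + (∑ j, q j * Real.log (q j))) / Real.log 2
      = (∑ i, p i * Real.log (p i)) / Real.log 2
        + (∑ j, q j * Real.log (q j)) / Real.log 2 := by ring
  linarith [h2, e5, e6]
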